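/- Let η ≥ ℵ₀ and λ > 0 be cardinals and let κ be an infinite regular cardinal. Then the forcing notion Add(η,λ) is κ-descending distributive if κ < cf(η) or κ > (η·λ)^{<η}, and Add(η,λ) is not κ-descending distributive if cf(η) ≤ κ ≤ η^{<η}·λ. -/

import Mathlib

universe u

open Cardinal

/-- A subset `D` of a forcing notion is *open dense* if it is downward closed and
for every condition `p` there is `q ∈ D` with `q ≤ p`. -/
def IsOpenDense {P : Type*} [Preorder P] (D : Set P) : Prop :=
  (∀ p ∈ D, ∀ q, q ≤ p → q ∈ D) ∧ ∀ p : P, ∃ q ∈ D, q ≤ p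

/-- A forcing notion `P` is `κ`-descending distributive if for every decreasing sequence
`(D_α)_{α<κ}` of open dense subsets, the intersection `⋂_{α<κ} D_α` is open dense. -/
def DescDist (P : Type*) [Preorder P] (κ : Cardinal) : Prop :=
  ∀ D : Ordinal → Set P,
    (∀ α, α < κ.ord → IsOpenDense (D α)) →
    (∀ α β : Ordinal, α ≤ β → β < κ.ord → D β ⊆ D α) →
    IsOpenDense (⋂ α ∈ Set.Iio κ.ord, D α)

/-- Conditions of the Cohen forcing `Add(η,λ)`: partial functions `p : λ × η → 2`
(coded by their functional graphs) whose domain has cardinality less than `η`. -/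
def AddCond (η lam : Cardinal.{u}) : Type u :=
  {s : Set ((lam.out × η.out) × Bool) //
    (∀ a b b', (a, b) ∈ s → (a, b') ∈ s → b = b') ∧
    Cardinal.mk (Prod.fst '' s) < η}

/-- `Add(η,λ)` is ordered by reverse inclusion of graphs: `q ≤ p` iff `q ⊇ p`. -/
instance (η lam : Cardinal.{u}) : PartialOrder (AddCond η lam) where
  le q p := p.1 ⊆ q.1
  le_refl p := subset_rfl
  le_trans a b c hab hbc := fun x hx => hab (hbc hx)
  le_antisymm a b hab hba := Subtype.ext (Set.Subset.antisymm hba hab)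

namespace S7

open Set Ordinal

variable {η lam : Cardinal.{u}}

/-- The domain of a condition. -/
def Dom (p : AddCond η lam) : Set (lam.out × η.out) := Prod.fst '' p.1

lemma le_iff {p q : AddCond η lam} : q ≤ p ↔ p.1 ⊆ q.1 := Iff.rfl

lemma fn (p : AddCond η lam) : ∀ a b b', (a, b) ∈ p.1 → (a, b') ∈ p.1 → b = b' := p.2.1

lemma mk_dom_lt (p : AddCond η lam) : #(Dom p) < η := p.2.2

lemma mem_dom {p : AddCond η lam} {a} : a ∈ Dom p ↔ ∃ b, (a, b) ∈ p.1 := by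
  constructor
  · rintro ⟨⟨a', b⟩, h, rfl⟩; exact ⟨b, h⟩
  · rintro ⟨b, h⟩; exact ⟨(a, b), h, rfl⟩

lemma dom_mono {p q : AddCond η lam} (h : q ≤ p) : Dom p ⊆ Dom q :=
  Set.image_mono h

/-- The empty condition. -/
def emptyCond (hη : ℵ₀ ≤ η) : AddCond η lam :=
  ⟨∅, fun _ _ _ h => h.elim, by
    rw [Set.image_empty, Cardinal.mk_emptyCollection]
    exact lt_of_lt_of_le Cardinal.aleph0_pos hη⟩

/-- Fill a condition on a set `A` of domain points with values given by `v`
(only at points where `p` is not yet defined). -/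
def fillSet (p : AddCond η lam) (A : Set (lam.out × η.out)) (v : lam.out × η.out → Bool) :
    Set ((lam.out × η.out) × Bool) :=
  p.1 ∪ {z | z.1 ∈ A ∧ z.1 ∉ Dom p ∧ z.2 = v z.1}

def fill (p : AddCond η lam) (A : Set (lam.out × η.out)) (v : lam.out × η.out → Bool)
    (hη : ℵ₀ ≤ η) (hA : #A < η) : AddCond η lam :=
  ⟨fillSet p A v, by
    constructor
    · rintro a b b' (hb | ⟨hA1, hnd, hv⟩) (hb' | ⟨hA1', hnd', hv'⟩)
      · exact fn p a b b' hb hb'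
      · exact absurd (mem_dom.2 ⟨b, hb⟩) hnd'
      · exact absurd (mem_dom.2 ⟨b', hb'⟩) hnd
      · simp only at hv hv'; rw [hv, hv']
    · have : Prod.fst '' fillSet p A v ⊆ (Dom p) ∪ A := by
        rintro x ⟨z, hz | hz, rfl⟩
        · exact Or.inl ⟨z, hz, rfl⟩
        · exact Or.inr hz.1
      refine lt_of_le_of_lt (Cardinal.mk_le_mk_of_subset this) ?_
      refine lt_of_le_of_lt (Cardinal.mk_union_le _ _) ?_
      exact Cardinal.add_lt_of_lt hη (mk_dom_lt p) hA⟩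

lemma fill_le {p : AddCond η lam} {A v hη hA} : fill p A v hη hA ≤ p :=
  Set.subset_union_left

lemma mem_fill_iff {p : AddCond η lam} {A v hη hA} {z} :
    z ∈ (fill p A v hη hA).1 ↔ z ∈ p.1 ∨ (z.1 ∈ A ∧ z.1 ∉ Dom p ∧ z.2 = v z.1) := Iff.rfl

lemma mem_fill_new {p : AddCond η lam} {A v hη hA} {a} (h1 : a ∈ A) (h2 : a ∉ Dom p) :
    (a, v a) ∈ (fill p A v hη hA).1 :=
  Or.inr ⟨h1, h2, rfl⟩

lemma dom_fill {p : AddCond η lam} {A v hη hA} {a} (h1 : a ∈ A) :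
    a ∈ Dom (fill p A v hη hA) := by
  by_cases h2 : a ∈ Dom p
  · exact dom_mono fill_le h2
  · exact mem_dom.2 ⟨v a, mem_fill_new h1 h2⟩

/-- A subset of `κ.ord.ToType` of cardinality `< κ` is strictly bounded, for regular `κ`. -/
lemma bdd_of_card_lt {κ : Cardinal.{u}} (hκ : κ.IsRegular) {S : Set κ.ord.ToType}
    (h : #S < κ) : ∃ b, ∀ t ∈ S, t < b := by
  have h2 : #S < Order.cof κ.ord.ToType := by
    rwa [Ordinal.cof_toType, hκ.cof_eq]
  by_contra hcon
  push_neg at hcon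
  exact absurd (Order.cof_le hcon) (not_le.2 h2)

/-- Driver lemma: a "tail-style" witness system refutes descending distributivity. -/
lemma not_descDist_of_W {κ : Cardinal.{u}} (hη : ℵ₀ ≤ η) (hκ : κ.IsRegular)
    (W : AddCond η lam → κ.ord.ToType → Prop)
    (mono : ∀ p q : AddCond η lam, q ≤ p → ∀ t, W p t → W q t)
    (bdd : ∀ p : AddCond η lam, ∃ b, ∀ t, W p t → t < b)
    (ext : ∀ (p : AddCond η lam) (a : κ.ord.ToType), ∃ t, a ≤ t ∧ ∃ q, q ≤ p ∧ W q t) :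
    ¬ DescDist (AddCond η lam) κ := by
  classical
  intro hD
  set ι := (Ordinal.ToType.mk (o := κ.ord)) with hι
  set D : Ordinal → Set (AddCond η lam) := fun α =>
    if h : α < κ.ord then {p | ∃ t, ι ⟨α, h⟩ ≤ t ∧ W p t} else Set.univ with hDdef
  have hOD : ∀ α, α < κ.ord → IsOpenDense (D α) := by
    intro α hα
    constructor
    · intro p hp q hq
      simp only [hDdef, dif_pos hα, Set.mem_setOf_eq] at hp ⊢
      obtain ⟨t, ht1, ht2⟩ := hp
      exact ⟨t, ht1, mono p q hq t ht2⟩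
    · intro p
      obtain ⟨t, ht, q, hq, hW⟩ := ext p (ι ⟨α, hα⟩)
      refine ⟨q, ?_, hq⟩
      simp only [hDdef, dif_pos hα, Set.mem_setOf_eq]
      exact ⟨t, ht, hW⟩
  have hdec : ∀ α β : Ordinal, α ≤ β → β < κ.ord → D β ⊆ D α := by
    intro α β hab hβ p hp
    have hα : α < κ.ord := lt_of_le_of_lt hab hβ
    simp only [hDdef, dif_pos hβ, Set.mem_setOf_eq] at hp
    simp only [hDdef, dif_pos hα, Set.mem_setOf_eq]
    obtain ⟨t, ht, hW⟩ := hp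
    refine ⟨t, le_trans ?_ ht, hW⟩
    exact ι.le_iff_le.2 (Subtype.mk_le_mk.2 hab)
  obtain ⟨-, hdense⟩ := hD D hOD hdec
  obtain ⟨q, hq, -⟩ := hdense (emptyCond hη)
  obtain ⟨b, hb⟩ := bdd q
  have hbκ : (ι.symm b : Ordinal) < κ.ord := (ι.symm b).2
  have hq' : q ∈ D (ι.symm b) := Set.mem_iInter₂.1 hq _ hbκ
  simp only [hDdef, dif_pos hbκ, Set.mem_setOf_eq] at hq'
  obtain ⟨t, ht, hW⟩ := hq'
  have hback : ι ⟨(ι.symm b : Ordinal), hbκ⟩ = b := by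
    have h1 : (⟨(ι.symm b : Ordinal), hbκ⟩ : Set.Iio κ.ord) = ι.symm b := Subtype.ext rfl
    rw [h1, OrderIso.apply_symm_apply]
  exact absurd (hb t hW) (not_lt.2 (hback ▸ ht))

section Idx

/-- The ordinal index of an element of `o.ToType`. -/
noncomputable def tIdx {o : Ordinal.{u}} (x : o.ToType) : Ordinal.{u} :=
  (@Ordinal.typein o.ToType (· < ·) isWellOrder_lt) x

lemma tIdx_lt {o : Ordinal.{u}} (x : o.ToType) : tIdx x < o := by
  have := @Ordinal.typein_lt_type o.ToType (· < ·) isWellOrder_lt x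
  rwa [Ordinal.type_toType] at this

lemma tIdx_inj {o : Ordinal.{u}} : Function.Injective (fun x : o.ToType => tIdx x) := by
  intro x y h
  exact @Ordinal.typein_injective o.ToType (· < ·) isWellOrder_lt x y h

lemma tIdx_surj {o : Ordinal.{u}} {o' : Ordinal.{u}} (h : o' < o) :
    ∃ x : o.ToType, tIdx x = o' := by
  have h' : o' < @Ordinal.type o.ToType (· < ·) isWellOrder_lt := by
    rwa [Ordinal.type_toType]
  obtain ⟨x, hx⟩ := @Ordinal.typein_surj o.ToType (· < ·) isWellOrder_lt o' h'
  exact ⟨x, hx⟩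

lemma tIdx_mono {o : Ordinal.{u}} {x y : o.ToType} (h : x ≤ y) : tIdx x ≤ tIdx y := by
  rcases eq_or_lt_of_le h with rfl | h'
  · exact le_rfl
  · have := (@Ordinal.typein_lt_typein o.ToType (· < ·) isWellOrder_lt x y).2 h'
    exact le_of_lt this

lemma mk_toType_card (c : Cardinal.{u}) : #(c.ord.ToType) = c := by
  rw [Cardinal.mk_toType, Cardinal.card_ord]

variable (η) in
/-- A fixed identification of `η.out` with the canonical type of `η.ord`. -/
noncomputable def toOrd : η.out ≃ η.ord.ToType :=
  (Cardinal.eq.mp (by rw [Cardinal.mk_out, Cardinal.mk_toType, Cardinal.card_ord])).some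

variable (η) in
noncomputable def xIdx (x : η.out) : Ordinal := tIdx (toOrd η x)

lemma xIdx_lt (x : η.out) : xIdx η x < η.ord := tIdx_lt _

lemma xIdx_inj : Function.Injective (xIdx η) := fun x y h =>
  (toOrd η).injective (tIdx_inj h)

variable (η) in
/-- The initial segment of `η.out` of order type `o`. -/
def seg (o : Ordinal.{u}) : Set η.out := {x | xIdx η x < o}

lemma mem_seg {x : η.out} {o : Ordinal.{u}} : x ∈ seg η o ↔ xIdx η x < o := Iff.rfl

lemma seg_mono {o o' : Ordinal.{u}} (h : o ≤ o') : seg η o ⊆ seg η o' :=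
  fun _ hx => mem_seg.2 (lt_of_lt_of_le (mem_seg.1 hx) h)

lemma mk_seg {o : Ordinal.{u}} (ho : o ≤ η.ord) : #(seg η o) = o.card := by
  have hf : Function.Bijective (fun x : seg η o =>
      (Ordinal.ToType.mk (o := o)) ⟨xIdx η x.1, x.2⟩) := by
    constructor
    · intro x y h
      have h2 : xIdx η x.1 = xIdx η y.1 := by
        have := ((Ordinal.ToType.mk (o := o))).injective h
        exact congrArg Subtype.val this
      exact Subtype.ext (xIdx_inj h2)
    · intro z
      obtain ⟨y, hy⟩ := tIdx_surj (lt_of_lt_of_le (Set.mem_Iio.1 (((Ordinal.ToType.mk (o := o))).symm z).2) ho)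
      have hxm : xIdx η ((toOrd η).symm y) = tIdx y := by
        unfold xIdx; rw [Equiv.apply_symm_apply]
      have hmem : xIdx η ((toOrd η).symm y) ∈ Set.Iio o := by
        rw [Set.mem_Iio, hxm, hy]
        exact Set.mem_Iio.1 (((Ordinal.ToType.mk (o := o))).symm z).2
      refine ⟨⟨(toOrd η).symm y, hmem⟩, ?_⟩
      show (Ordinal.ToType.mk (o := o)) ⟨xIdx η ((toOrd η).symm y), hmem⟩ = z
      have heq : (⟨xIdx η ((toOrd η).symm y), hmem⟩ : Set.Iio o)
          = ((Ordinal.ToType.mk (o := o))).symm z := by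
        apply Subtype.ext
        show xIdx η ((toOrd η).symm y) = _
        rw [hxm, hy]
      rw [heq, OrderIso.apply_symm_apply]
  calc #(seg η o) = #(o.ToType) := Cardinal.mk_congr (Equiv.ofBijective _ hf)
    _ = o.card := Cardinal.mk_toType o

lemma mk_seg_lt {o : Ordinal.{u}} (ho : o < η.ord) : #(seg η o) < η := by
  rw [mk_seg (le_of_lt ho)]
  exact Cardinal.lt_ord.1 ho

end Idx

section Cof

/-- A monotone cofinal family in `o` indexed by `(o.cof.ord).ToType`. -/
lemma exists_cofinal_family (o : Ordinal.{u}) (ho : ℵ₀ ≤ o.cof) :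
    ∃ F : (o.cof.ord).ToType → Ordinal.{u},
      (∀ t, F t < o) ∧ (∀ s t, s ≤ t → F s ≤ F t) ∧ (∀ x < o, ∃ t, x ≤ F t) := by
  classical
  obtain ⟨S, hUnb, hCard⟩ := Order.exists_cof_eq (α := o.ToType)
  rw [Ordinal.cof_toType] at hCard
  have e : (o.cof.ord).ToType ≃ S :=
    (Cardinal.eq.mp (by rw [mk_toType_card, hCard])).some
  set F₀ : (o.cof.ord).ToType → Ordinal.{u} := fun t => tIdx ((e t).1) with hF₀
  have hF₀lt : ∀ t, F₀ t < o := fun t => tIdx_lt _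
  set F : (o.cof.ord).ToType → Ordinal.{u} := fun t => ⨆ s : Set.Iic t, F₀ s.1 with hF
  have hIic : ∀ t : (o.cof.ord).ToType, #(Set.Iic t) < o.cof := by
    intro t
    have h1 : Set.Iic t = insert t (Set.Iio t) := by
      rw [Set.Iio_insert]
    rw [h1]
    refine lt_of_le_of_lt (Cardinal.mk_insert_le) ?_
    exact Cardinal.add_lt_of_lt ho (Cardinal.mk_Iio_ord_toType t)
      (lt_of_lt_of_le Cardinal.one_lt_aleph0 ho)
  refine ⟨F, ?_, ?_, ?_⟩
  · intro t
    exact Ordinal.iSup_lt_of_lt_cof (hIic t) (fun s => hF₀lt s.1)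
  · intro s t hst
    rw [hF]
    refine Ordinal.iSup_le_iff.2 (fun s' => ?_)
    exact Ordinal.le_iSup (fun z : Set.Iic t => F₀ z.1) ⟨s'.1, le_trans s'.2 hst⟩
  · intro x hx
    obtain ⟨y, hy⟩ := tIdx_surj hx
    obtain ⟨s₀, hs₀S, hs₀⟩ := hUnb y
    have hys : y ≤ s₀ := hs₀
    refine ⟨e.symm ⟨s₀, hs₀S⟩, ?_⟩
    have h1 : x ≤ F₀ (e.symm ⟨s₀, hs₀S⟩) := by
      rw [hF₀]
      simp only [Equiv.apply_symm_apply]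
      rw [← hy]
      exact tIdx_mono hys
    exact le_trans h1 (Ordinal.le_iSup (fun z : Set.Iic _ => F₀ z.1) ⟨_, le_rfl⟩)

end Cof

section Misc

lemma eta_le_powerlt (hη : ℵ₀ ≤ η) : η ≤ η ^< η := by
  have h := Cardinal.le_powerlt (b := η) (c := 1) η (lt_of_lt_of_le Cardinal.one_lt_aleph0 hη)
  rwa [Cardinal.power_one] at h

/-- An embedding from a cardinality inequality. -/
noncomputable def toEmb {α β : Type u} (h : #α ≤ #β) : α ↪ β :=
  (Cardinal.le_def α β).mp h |>.some

end Misc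

section Constructions

/-- A point in the `λ`-coordinate, available since `λ > 0`. -/
noncomputable def i0 (hlam : 0 < lam) : lam.out :=
  Classical.choice (Cardinal.mk_ne_zero_iff.1 (by rw [Cardinal.mk_out]; exact ne_of_gt hlam))

lemma nonempty_out (hη : ℵ₀ ≤ η) : Nonempty η.out :=
  Cardinal.mk_ne_zero_iff.1 (by
    rw [Cardinal.mk_out]
    exact ne_of_gt (lt_of_lt_of_le Cardinal.aleph0_pos hη))

/-- Case κ = cf(η): the classical cofinality construction. -/
lemma caseA (hη : ℵ₀ ≤ η) (hlam : 0 < lam) (hreg : (η.ord.cof).IsRegular) :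
    ¬ DescDist (AddCond η lam) (η.ord.cof) := by
  classical
  have hcof : ℵ₀ ≤ η.ord.cof := Ordinal.aleph0_le_cof.2 (Cardinal.isSuccLimit_ord hη)
  obtain ⟨F, hFlt, hFmono, hFcof⟩ := exists_cofinal_family η.ord hcof
  refine not_descDist_of_W hη hreg
    (W := fun p t => ∀ x ∈ seg η (F t), (i0 hlam, x) ∈ Dom p) ?_ ?_ ?_
  · intro p q hq t hp x hx
    exact dom_mono hq (hp x hx)
  · intro p
    by_contra hcon
    push_neg at hcon
    have hall : ∀ x : η.out, (i0 hlam, x) ∈ Dom p := by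
      intro x
      have hsucc : Order.succ (xIdx η x) < η.ord :=
        (Cardinal.isSuccLimit_ord hη).succ_lt (xIdx_lt x)
      obtain ⟨t₀, ht₀⟩ := hFcof _ hsucc
      obtain ⟨t, hWt, htt⟩ := hcon t₀
      have hxt : x ∈ seg η (F t) := by
        rw [mem_seg]
        have h1 : xIdx η x < Order.succ (xIdx η x) := Order.lt_succ_of_not_isMax (by simp)
        exact lt_of_lt_of_le h1 (le_trans ht₀ (hFmono t₀ t htt))
      exact hWt x hxt
    have hinj : Function.Injective (fun x : η.out => (⟨(i0 hlam, x), hall x⟩ : Dom p)) := by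
      intro x y h
      have := congrArg (fun z : Dom p => z.1.2) h
      exact this
    have hle : η ≤ #(Dom p) := by
      have := Cardinal.mk_le_of_injective hinj
      rwa [Cardinal.mk_out] at this
    exact absurd (mk_dom_lt p) (not_lt.2 hle)
  · intro p a
    refine ⟨a, le_rfl, ?_⟩
    have hA : #((fun x => (i0 hlam, x)) '' seg η (F a)) < η :=
      lt_of_le_of_lt Cardinal.mk_image_le (mk_seg_lt (hFlt a))
    refine ⟨fill p _ (fun _ => false) hη hA, fill_le, ?_⟩
    intro x hx
    exact dom_fill (Set.mem_image_of_mem _ hx)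

/-- Case η^{<η} < κ ≤ λ: the support construction. -/
lemma caseE (hη : ℵ₀ ≤ η) {κ : Cardinal.{u}} (hκ : κ.IsRegular) (hηκ : η < κ)
    (hκlam : κ ≤ lam) : ¬ DescDist (AddCond η lam) κ := by
  classical
  have hemb : #(κ.ord.ToType) ≤ #(lam.out) := by
    rw [mk_toType_card, Cardinal.mk_out]; exact hκlam
  set e := toEmb hemb with he
  obtain ⟨x₀⟩ := nonempty_out hη
  refine not_descDist_of_W hη hκ
    (W := fun p t => ∃ z ∈ p.1, z.1.1 = e t) ?_ ?_ ?_
  · intro p q hq t hp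
    obtain ⟨z, hz, hz1⟩ := hp
    exact ⟨z, hq hz, hz1⟩
  · intro p
    set S := {t : κ.ord.ToType | ∃ z ∈ p.1, z.1.1 = e t} with hS
    have hcard : #S < κ := by
      have hψ : ∀ t : S, ∃ z ∈ p.1, z.1.1 = e t.1 := fun t => t.2
      set ψ : S → Dom p := fun t => ⟨(hψ t).choose.1,
        ⟨(hψ t).choose, (hψ t).choose_spec.1, rfl⟩⟩ with hψdef
      have hinj : Function.Injective ψ := by
        intro t t' h
        have h1 : (hψ t).choose.1.1 = (hψ t').choose.1.1 := by
          have := congrArg (fun z : Dom p => z.1.1) h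
          exact this
        rw [(hψ t).choose_spec.2, (hψ t').choose_spec.2] at h1
        exact Subtype.ext (e.injective h1)
      exact lt_trans (lt_of_le_of_lt (Cardinal.mk_le_of_injective hinj) (mk_dom_lt p)) hηκ
    obtain ⟨b, hb⟩ := bdd_of_card_lt hκ hcard
    exact ⟨b, fun t ht => hb t ht⟩
  · intro p a
    refine ⟨a, le_rfl, ?_⟩
    have hA : #({(e a, x₀)} : Set (lam.out × η.out)) < η := by
      rw [Cardinal.mk_singleton]
      exact lt_of_lt_of_le Cardinal.one_lt_aleph0 hη
    refine ⟨fill p {(e a, x₀)} (fun _ => false) hη hA, fill_le, ?_⟩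
    obtain ⟨b, hb⟩ := mem_dom.1 (dom_fill (A := {(e a, x₀)}) (v := fun _ => false)
      (hη := hη) (hA := hA) (p := p) rfl)
    exact ⟨((e a, x₀), b), hb, rfl⟩

/-- Case η < κ ≤ 2^{<η}: totalized binary codes on disjoint boxes. -/
lemma caseC1 (hη : ℵ₀ ≤ η) (hlam : 0 < lam) {κ : Cardinal.{u}} (hκ : κ.IsRegular)
    (hηκ : η < κ) {ν : Cardinal.{u}} (hν : ν < η) (hcode : κ ≤ 2 ^ ν) :
    ¬ DescDist (AddCond η lam) κ := by
  classical
  have hJle : #(η.out × ν.out) ≤ #η.out := by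
    rw [Cardinal.mk_prod, Cardinal.lift_id, Cardinal.lift_id, Cardinal.mk_out, Cardinal.mk_out]
    calc η * ν ≤ η * η := mul_le_mul_right (le_of_lt hν) η
      _ = η := Cardinal.mul_eq_self hη
  set J := toEmb hJle with hJ
  have hYle : #(κ.ord.ToType) ≤ #(ν.out → Bool) := by
    rw [mk_toType_card, Cardinal.mk_arrow, Cardinal.mk_bool, Cardinal.mk_out]
    simp only [Cardinal.lift_id', Cardinal.lift_ofNat, Cardinal.lift_id]
    exact hcode
  set Y := toEmb hYle with hY
  refine not_descDist_of_W hη hκ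
    (W := fun p t => ∃ δ : η.out, ∀ i : ν.out, ((i0 hlam, J (δ, i)), Y t i) ∈ p.1) ?_ ?_ ?_
  · intro p q hq t hp
    obtain ⟨δ, hδ⟩ := hp
    exact ⟨δ, fun i => hq (hδ i)⟩
  · intro p
    set S := {t : κ.ord.ToType | ∃ δ : η.out, ∀ i : ν.out, ((i0 hlam, J (δ, i)), Y t i) ∈ p.1}
      with hS
    have hcard : #S < κ := by
      have hψ : ∀ t : S, ∃ δ : η.out, ∀ i : ν.out, ((i0 hlam, J (δ, i)), Y t.1 i) ∈ p.1 :=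
        fun t => t.2
      have hinj : Function.Injective (fun t : S => (hψ t).choose) := by
        intro t t' h
        have hsp := (hψ t).choose_spec
        have hsp' := (hψ t').choose_spec
        have h' : (hψ t).choose = (hψ t').choose := h
        rw [h'] at hsp
        have hYeq : Y t.1 = Y t'.1 := by
          funext i
          exact fn p _ _ _ (hsp i) (hsp' i)
        exact Subtype.ext (Y.injective hYeq)
      have : #S ≤ η := by
        have h1 := Cardinal.mk_le_of_injective hinj
        rwa [Cardinal.mk_out] at h1
      exact lt_of_le_of_lt this hηκ
    obtain ⟨b, hb⟩ := bdd_of_card_lt hκ hcard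
    exact ⟨b, fun t ht => hb t ht⟩
  · intro p a
    refine ⟨a, le_rfl, ?_⟩
    set Tch := {δ : η.out | ∃ i : ν.out, (i0 hlam, J (δ, i)) ∈ Dom p} with hTch
    have hTchlt : #Tch < η := by
      have hψ : ∀ d : Tch, ∃ i : ν.out, (i0 hlam, J (d.1, i)) ∈ Dom p := fun d => d.2
      have hinj : Function.Injective
          (fun d : Tch => (⟨(i0 hlam, J (d.1, (hψ d).choose)), (hψ d).choose_spec⟩ : Dom p)) := by
        intro d d' h
        have h1 := congrArg (fun z : Dom p => z.1.2) h
        simp only at h1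
        have h2 := J.injective h1
        exact Subtype.ext (congrArg Prod.fst h2)
      exact lt_of_le_of_lt (Cardinal.mk_le_of_injective hinj) (mk_dom_lt p)
    obtain ⟨δ, hδ⟩ : ∃ δ : η.out, δ ∉ Tch := by
      by_contra hcc
      push_neg at hcc
      have : #(Set.univ : Set η.out) ≤ #Tch :=
        Cardinal.mk_le_mk_of_subset (fun x _ => hcc x)
      rw [Cardinal.mk_univ, Cardinal.mk_out] at this
      exact absurd hTchlt (not_lt.2 this)
    have hA : #((fun i : ν.out => (i0 hlam, J (δ, i))) '' Set.univ) < η := by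
      refine lt_of_le_of_lt Cardinal.mk_image_le ?_
      rw [Cardinal.mk_univ, Cardinal.mk_out]
      exact hν
    set val : lam.out × η.out → Bool := fun c =>
      if h : ∃ i : ν.out, c = (i0 hlam, J (δ, i)) then Y a h.choose else false with hval
    refine ⟨fill p _ val hη hA, fill_le, δ, fun i => ?_⟩
    have hmemA : (i0 hlam, J (δ, i)) ∈ (fun i : ν.out => (i0 hlam, J (δ, i))) '' Set.univ :=
      ⟨i, trivial, rfl⟩
    have hnd : (i0 hlam, J (δ, i)) ∉ Dom p := fun hmem => hδ ⟨i, hmem⟩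
    have hvv : val (i0 hlam, J (δ, i)) = Y a i := by
      have hex : ∃ i' : ν.out, ((i0 hlam, J (δ, i)) : lam.out × η.out) = (i0 hlam, J (δ, i')) :=
        ⟨i, rfl⟩
      show (if h : ∃ i' : ν.out,
          ((i0 hlam, J (δ, i)) : lam.out × η.out) = (i0 hlam, J (δ, i')) then
          Y a h.choose else false) = Y a i
      rw [dif_pos hex]
      have h1 : J (δ, i) = J (δ, hex.choose) := congrArg Prod.snd hex.choose_spec
      have h2 : hex.choose = i := (congrArg Prod.snd (J.injective h1)).symm
      rw [h2]
    have := mem_fill_new (p := p) (v := val) (hη := hη) (hA := hA) hmemA hnd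
    rwa [hvv] at this

/-- Case 2^{<η} < κ ≤ η^{<η}: sparse graph codes. -/
lemma caseC2 (hη : ℵ₀ ≤ η) (hlam : 0 < lam) {κ : Cardinal.{u}} (hκ : κ.IsRegular)
    (hηκ : η < κ) (h2κ : 2 ^< η < κ) {ν : Cardinal.{u}} (hν : ν < η) (hcode : κ ≤ η ^ ν) :
    ¬ DescDist (AddCond η lam) κ := by
  classical
  have hKle : #(η.out × ν.out × η.out) ≤ #η.out := by
    simp only [Cardinal.mk_prod, Cardinal.lift_id, Cardinal.mk_out]
    calc η * (ν * η) ≤ η * (η * η) :=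
          mul_le_mul_right (mul_le_mul_left (le_of_lt hν) η) η
      _ = η := by rw [Cardinal.mul_eq_self hη, Cardinal.mul_eq_self hη]
  set K := toEmb hKle with hK
  have hXle : #(κ.ord.ToType) ≤ #(ν.out → η.out) := by
    rw [mk_toType_card, ← Cardinal.power_def, Cardinal.mk_out, Cardinal.mk_out]
    exact hcode
  set X := toEmb hXle with hX
  refine not_descDist_of_W hη hκ
    (W := fun p t => ∃ δ : η.out, ∀ i : ν.out, ((i0 hlam, K (δ, i, X t i)), true) ∈ p.1) ?_ ?_ ?_
  · intro p q hq t hp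
    obtain ⟨δ, hδ⟩ := hp
    exact ⟨δ, fun i => hq (hδ i)⟩
  · intro p
    set Sδ : η.out → Set (κ.ord.ToType) := fun δ =>
      {t | ∀ i : ν.out, ((i0 hlam, K (δ, i, X t i)), true) ∈ p.1} with hSδ
    have hSsub : {t : κ.ord.ToType | ∃ δ : η.out,
        ∀ i : ν.out, ((i0 hlam, K (δ, i, X t i)), true) ∈ p.1} ⊆ ⋃ δ, Sδ δ := by
      rintro t ⟨δ, hδ⟩
      exact Set.mem_iUnion.2 ⟨δ, hδ⟩
    have hSδcard : ∀ δ, #(Sδ δ) ≤ 2 ^< η := by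
      intro δ
      have hφ : Function.Injective (fun t : Sδ δ =>
          (fun i : ν.out => (⟨(i0 hlam, K (δ, i, X t.1 i)), ⟨_, t.2 i, rfl⟩⟩ : Dom p))) := by
        intro t t' h
        have hXeq : X t.1 = X t'.1 := by
          funext i
          have h1 := congrArg (fun f => (f i : Dom p).1.2) h
          simp only at h1
          have h2 := K.injective h1
          have h3 := congrArg (fun z : η.out × ν.out × η.out => z.2.2) h2
          exact h3
        exact Subtype.ext (X.injective hXeq)
      have h1 : #(Sδ δ) ≤ #(ν.out → Dom p) := Cardinal.mk_le_of_injective hφ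
      have h2 : #(ν.out → Dom p) = #(Dom p) ^ ν := by
        rw [← Cardinal.power_def, Cardinal.mk_out]
      have h3 : #(Dom p) ^ ν ≤ 2 ^ (#(Dom p) * ν) := by
        rw [Cardinal.power_mul]
        exact Cardinal.power_le_power_right (le_of_lt (Cardinal.cantor _))
      have h4 : (2 : Cardinal) ^ (#(Dom p) * ν) ≤ 2 ^< η :=
        Cardinal.le_powerlt 2 (Cardinal.mul_lt_of_lt hη (mk_dom_lt p) hν)
      exact le_trans h1 (le_trans (le_of_eq h2) (le_trans h3 h4))
    have hcard : #{t : κ.ord.ToType | ∃ δ : η.out,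
        ∀ i : ν.out, ((i0 hlam, K (δ, i, X t i)), true) ∈ p.1} < κ := by
      refine lt_of_le_of_lt (Cardinal.mk_le_mk_of_subset hSsub) ?_
      refine lt_of_le_of_lt (Cardinal.mk_iUnion_le Sδ) ?_
      have hbound : ⨆ δ, #(Sδ δ) ≤ 2 ^< η := by
        have : Nonempty η.out := nonempty_out hη
        exact ciSup_le' hSδcard
      refine lt_of_le_of_lt (mul_le_mul' (le_of_eq (Cardinal.mk_out η)) hbound) ?_
      exact Cardinal.mul_lt_of_lt hκ.aleph0_le hηκ h2κ
    obtain ⟨b, hb⟩ := bdd_of_card_lt hκ hcard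
    exact ⟨b, fun t ht => hb t ht⟩
  · intro p a
    refine ⟨a, le_rfl, ?_⟩
    set Tch := {δ : η.out | ∃ i : ν.out, ∃ x : η.out, (i0 hlam, K (δ, i, x)) ∈ Dom p} with hTch
    have hTchlt : #Tch < η := by
      have hψ : ∀ d : Tch, ∃ i : ν.out, ∃ x : η.out, (i0 hlam, K (d.1, i, x)) ∈ Dom p :=
        fun d => d.2
      have hinj : Function.Injective (fun d : Tch =>
          (⟨(i0 hlam, K (d.1, (hψ d).choose, (hψ d).choose_spec.choose)),
            (hψ d).choose_spec.choose_spec⟩ : Dom p)) := by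
        intro d d' h
        have h1 := congrArg (fun z : Dom p => z.1.2) h
        simp only at h1
        have h2 := K.injective h1
        exact Subtype.ext (congrArg Prod.fst h2)
      exact lt_of_le_of_lt (Cardinal.mk_le_of_injective hinj) (mk_dom_lt p)
    obtain ⟨δ, hδ⟩ : ∃ δ : η.out, δ ∉ Tch := by
      by_contra hcc
      push_neg at hcc
      have : #(Set.univ : Set η.out) ≤ #Tch :=
        Cardinal.mk_le_mk_of_subset (fun x _ => hcc x)
      rw [Cardinal.mk_univ, Cardinal.mk_out] at this
      exact absurd hTchlt (not_lt.2 this)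
    have hA : #((fun i : ν.out => (i0 hlam, K (δ, i, X a i))) '' Set.univ) < η := by
      refine lt_of_le_of_lt Cardinal.mk_image_le ?_
      rw [Cardinal.mk_univ, Cardinal.mk_out]
      exact hν
    refine ⟨fill p _ (fun _ => true) hη hA, fill_le, δ, fun i => ?_⟩
    have hmemA : (i0 hlam, K (δ, i, X a i)) ∈
        (fun i : ν.out => (i0 hlam, K (δ, i, X a i))) '' Set.univ := ⟨i, trivial, rfl⟩
    have hnd : (i0 hlam, K (δ, i, X a i)) ∉ Dom p := fun hmem => hδ ⟨i, X a i, hmem⟩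
    exact mem_fill_new (p := p) (v := fun _ => true) (hη := hη) (hA := hA) hmemA hnd

/-- Case cf(η) < κ < η: graded certificate construction. -/
lemma caseD (hη : ℵ₀ ≤ η) (hlam : 0 < lam) {κ : Cardinal.{u}} (hκ : κ.IsRegular)
    (hθκ : η.ord.cof < κ) (hκη : κ < η) :
    ¬ DescDist (AddCond η lam) κ := by
  classical
  have hcof : ℵ₀ ≤ η.ord.cof := Ordinal.aleph0_le_cof.2 (Cardinal.isSuccLimit_ord hη)
  have hℵκ : ℵ₀ < κ := lt_of_le_of_lt hcof hθκ
  have hℵη : ℵ₀ < η := lt_trans hℵκ hκη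
  obtain ⟨F₁, hF₁lt, hF₁mono, hF₁cof⟩ := exists_cofinal_family η.ord hcof
  set F : ((η.ord.cof).ord).ToType → Ordinal.{u} :=
    fun n => max (F₁ n) ((ℵ₀ : Cardinal.{u}).ord) with hFdef
  have hFlt : ∀ n, F n < η.ord := fun n =>
    max_lt (hF₁lt n) (Cardinal.ord_lt_ord.2 hℵη)
  have hFcof : ∀ x < η.ord, ∃ n, x ≤ F n := by
    intro x hx
    obtain ⟨n, hn⟩ := hF₁cof x hx
    exact ⟨n, le_trans hn (le_max_left _ _)⟩
  set B : ((η.ord.cof).ord).ToType → Set η.out := fun n => seg η (F n) with hBdef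
  set μ : ((η.ord.cof).ord).ToType → Cardinal.{u} := fun n => #(B n) with hμdef
  have hμeq : ∀ n, μ n = (F n).card := fun n => mk_seg (le_of_lt (hFlt n))
  have hμinf : ∀ n, ℵ₀ ≤ μ n := by
    intro n
    rw [hμeq n]
    calc ℵ₀ = ((ℵ₀ : Cardinal.{u}).ord).card := (Cardinal.card_ord _).symm
      _ ≤ (F n).card := Ordinal.card_le_card (le_max_right _ _)
  have hμlt : ∀ n, μ n < η := fun n => mk_seg_lt (hFlt n)
  have hJle : #(((η.ord.cof).ord).ToType × κ.ord.ToType × η.out) ≤ #η.out := by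
    simp only [Cardinal.mk_prod, Cardinal.lift_id, Cardinal.mk_out, mk_toType_card]
    calc η.ord.cof * (κ * η) ≤ η * (η * η) :=
          mul_le_mul' (le_trans (le_of_lt hθκ) (le_of_lt hκη))
            (mul_le_mul' (le_of_lt hκη) le_rfl)
      _ = η := by rw [Cardinal.mul_eq_self hη, Cardinal.mul_eq_self hη]
  set Jd := toEmb hJle with hJd
  set pt : ((η.ord.cof).ord).ToType → κ.ord.ToType → η.out → lam.out × η.out :=
    fun n v x => (i0 hlam, Jd (n, v, x)) with hptdef
  have hptinj : ∀ {n v x n' v' x'}, pt n v x = pt n' v' x' → n = n' ∧ v = v' ∧ x = x' := by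
    intro n v x n' v' x' h
    have h1 := Jd.injective (congrArg Prod.snd h)
    exact ⟨congrArg (fun z : _ × κ.ord.ToType × η.out => z.1) h1,
      congrArg (fun z : _ × κ.ord.ToType × η.out => z.2.1) h1,
      congrArg (fun z : _ × κ.ord.ToType × η.out => z.2.2) h1⟩
  set TS : AddCond η lam → ((η.ord.cof).ord).ToType → κ.ord.ToType → Set η.out :=
    fun p n v => {x | x ∈ B n ∧ (pt n v x, true) ∈ p.1} with hTSdef
  set DF : AddCond η lam → ((η.ord.cof).ord).ToType → κ.ord.ToType → Prop :=
    fun p n v => ∀ x ∈ B n, pt n v x ∈ Dom p with hDFdef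
  set Cert : AddCond η lam → ((η.ord.cof).ord).ToType → κ.ord.ToType → Prop :=
    fun p n v => #(TS p n v) = μ n ∧ ∀ v', v' ≠ v → DF p n v' ∧ #(TS p n v') < μ n
    with hCertdef
  have hTSsub : ∀ p n v, TS p n v ⊆ B n := fun p n v x hx => hx.1
  have hTSmono : ∀ p q n v, q ≤ p → TS p n v ⊆ TS q n v :=
    fun p q n v hq x hx => ⟨hx.1, hq hx.2⟩
  have hTSstable : ∀ p q n v, q ≤ p → DF p n v → TS q n v = TS p n v := by
    intro p q n v hq hDF
    apply Set.Subset.antisymm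
    · intro x hx
      obtain ⟨b, hb⟩ := mem_dom.1 (hDF x hx.1)
      have hb' : b = true := fn q _ _ _ (hq hb) hx.2
      exact ⟨hx.1, hb' ▸ hb⟩
    · exact hTSmono p q n v hq
  have hTcard : ∀ (p : AddCond η lam) n v, #{x | x ∈ B n ∧ pt n v x ∈ Dom p} ≤ #(Dom p) := by
    intro p n v
    have hinj : Function.Injective
        (fun x : {x | x ∈ B n ∧ pt n v x ∈ Dom p} => (⟨pt n v x.1, x.2.2⟩ : Dom p)) := by
      intro x x' h
      have h1 := congrArg (fun z : Dom p => z.1) h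
      exact Subtype.ext (hptinj h1).2.2
    exact Cardinal.mk_le_of_injective hinj
  refine not_descDist_of_W hη hκ (W := fun p v => ∃ n, Cert p n v) ?_ ?_ ?_
  · -- monotonicity
    intro p q hq v hp
    obtain ⟨n, hc1, hc2⟩ := hp
    refine ⟨n, ?_, ?_⟩
    · refine le_antisymm (le_of_le_of_eq (Cardinal.mk_le_mk_of_subset (hTSsub q n v)) rfl) ?_
      calc μ n = #(TS p n v) := hc1.symm
        _ ≤ #(TS q n v) := Cardinal.mk_le_mk_of_subset (hTSmono p q n v hq)
    · intro v' hv'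
      obtain ⟨hDF', hlt'⟩ := hc2 v' hv'
      refine ⟨fun x hx => dom_mono hq (hDF' x hx), ?_⟩
      rw [hTSstable p q n v' hq hDF']
      exact hlt'
  · -- boundedness
    intro p
    set S := {v : κ.ord.ToType | ∃ n, Cert p n v} with hS
    have hcard : #S < κ := by
      have hψ : ∀ v : S, ∃ n, Cert p n v.1 := fun v => v.2
      have hinj : Function.Injective (fun v : S => (hψ v).choose) := by
        intro v v' h
        by_contra hne
        have hne' : v.1 ≠ v'.1 := fun hh => hne (Subtype.ext hh)
        have hc := (hψ v).choose_spec
        have hc' := (hψ v').choose_spec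
        have h' : (hψ v).choose = (hψ v').choose := h
        rw [h'] at hc
        have h1 : #(TS p (hψ v').choose v'.1) < μ (hψ v').choose :=
          (hc.2 v'.1 (fun hh => hne' hh.symm)).2
        rw [hc'.1] at h1
        exact lt_irrefl _ h1
      have h2 : #S ≤ η.ord.cof := by
        have := Cardinal.mk_le_of_injective hinj
        rwa [mk_toType_card] at this
      exact lt_of_le_of_lt h2 hθκ
    obtain ⟨b, hb⟩ := bdd_of_card_lt hκ hcard
    exact ⟨b, fun t ht => hb t ht⟩
  · -- extension
    intro p a
    refine ⟨a, le_rfl, ?_⟩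
    set ρ := #(Dom p) with hρdef
    have hρ : ρ < η := mk_dom_lt p
    have hsuccρ : Order.succ ρ < η := by
      by_contra hcc
      have heq : η = Order.succ ρ :=
        le_antisymm (not_lt.1 hcc) (Order.succ_le_of_lt hρ)
      have hρinf : ℵ₀ ≤ ρ := by
        by_contra hfin
        have h1 : Order.succ ρ ≤ ℵ₀ := Order.succ_le_of_lt (not_le.1 hfin)
        exact absurd (heq ▸ h1 : η ≤ ℵ₀) (not_le.2 hℵη)
      have hreg : η.IsRegular := heq ▸ Cardinal.isRegular_succ hρinf
      have hcofη : η.ord.cof = η := hreg.cof_eq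
      have h2 : η < κ := hcofη ▸ hθκ
      exact absurd hκη (not_lt.2 (le_of_lt h2))
    obtain ⟨n, hn⟩ := hFcof ((Order.succ ρ).ord) (Cardinal.ord_lt_ord.2 hsuccρ)
    have hρμ : ρ < μ n := by
      have h1 : Order.succ ρ ≤ μ n := by
        rw [hμeq n]
        calc Order.succ ρ = ((Order.succ ρ).ord).card := (Cardinal.card_ord _).symm
          _ ≤ (F n).card := Ordinal.card_le_card hn
      exact lt_of_lt_of_le (Order.lt_succ_of_not_isMax (not_isMax ρ)) h1
    set A : Set (lam.out × η.out) :=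
      (fun z : κ.ord.ToType × η.out => pt n z.1 z.2) '' {z | z.2 ∈ B n} with hAdef
    have hA : #A < η := by
      refine lt_of_le_of_lt Cardinal.mk_image_le ?_
      have hinj2 : Function.Injective
          (fun w : {z : κ.ord.ToType × η.out | z.2 ∈ B n} =>
            ((w.1.1, ⟨w.1.2, w.2⟩) : κ.ord.ToType × B n)) := by
        intro w w' h
        have h1 := congrArg Prod.fst h
        have h2 := congrArg (fun z : κ.ord.ToType × B n => (z.2 : η.out)) h
        simp only at h1 h2
        exact Subtype.ext (Prod.ext h1 h2)
      refine lt_of_le_of_lt (Cardinal.mk_le_of_injective hinj2) ?_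
      rw [Cardinal.mk_prod, Cardinal.lift_id, Cardinal.lift_id, mk_toType_card]
      exact Cardinal.mul_lt_of_lt hη hκη (hμlt n)
    have hmemA : ∀ (v : κ.ord.ToType) (x : η.out), x ∈ B n → pt n v x ∈ A :=
      fun v x hx => ⟨(v, x), hx, rfl⟩
    set val : lam.out × η.out → Bool := fun c =>
      if h : ∃ z : κ.ord.ToType × η.out, z.2 ∈ B n ∧ c = pt n z.1 z.2 then
        (if h.choose.1 = a then true else false) else false with hvaldef
    have hval_eval : ∀ (v : κ.ord.ToType) (x : η.out), x ∈ B n →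
        val (pt n v x) = (if v = a then true else false) := by
      intro v x hx
      have hex : ∃ z : κ.ord.ToType × η.out, z.2 ∈ B n ∧ pt n v x = pt n z.1 z.2 :=
        ⟨(v, x), hx, rfl⟩
      show (if h : ∃ z : κ.ord.ToType × η.out, z.2 ∈ B n ∧ pt n v x = pt n z.1 z.2 then
        (if h.choose.1 = a then true else false) else false) = (if v = a then true else false)
      rw [dif_pos hex]
      have h2 : hex.choose.1 = v := ((hptinj hex.choose_spec.2).2.1).symm
      rw [h2]
    set q := fill p A val hη hA with hqdef
    have hDomq : ∀ (v : κ.ord.ToType) (x : η.out), x ∈ B n → pt n v x ∈ Dom q := by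
      intro v x hx
      by_cases hdp : pt n v x ∈ Dom p
      · exact dom_mono fill_le hdp
      · exact dom_fill (hmemA v x hx)
    refine ⟨q, fill_le, n, ?_, ?_⟩
    · -- #TS q n a = μ n
      set Tc : Set η.out := {x | x ∈ B n ∧ pt n a x ∈ Dom p} with hTcdef
      set Rest : Set η.out := B n \ Tc with hRestdef
      have hsub1 : Rest ⊆ TS q n a := by
        intro x hx
        have hxB : x ∈ B n := hx.1
        have hnd : pt n a x ∉ Dom p := fun hdp => hx.2 ⟨hxB, hdp⟩
        have hmem := mem_fill_new (p := p) (v := val) (hη := hη) (hA := hA)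
          (hmemA a x hxB) hnd
        have hv : val (pt n a x) = true := by rw [hval_eval a x hxB, if_pos rfl]
        rw [hv] at hmem
        exact ⟨hxB, hmem⟩
      have hge : μ n ≤ #(TS q n a) := by
        by_contra hcc
        push_neg at hcc
        have hd : #Rest < μ n :=
          lt_of_le_of_lt (Cardinal.mk_le_mk_of_subset hsub1) hcc
        have hcov : B n ⊆ Rest ∪ Tc := by
          intro x hx
          by_cases hdp : pt n a x ∈ Dom p
          · exact Or.inr ⟨hx, hdp⟩
          · exact Or.inl ⟨hx, fun hc => hdp hc.2⟩
        have h1 : μ n ≤ #Rest + #Tc :=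
          le_trans (Cardinal.mk_le_mk_of_subset hcov) (Cardinal.mk_union_le _ _)
        have h2 : #Rest + #Tc < μ n :=
          Cardinal.add_lt_of_lt (hμinf n) hd
            (lt_of_le_of_lt (hTcard p n a) hρμ)
        exact absurd (lt_of_le_of_lt h1 h2) (lt_irrefl _)
      exact le_antisymm (Cardinal.mk_le_mk_of_subset (hTSsub q n a)) hge
    · -- other columns
      intro v' hv'
      refine ⟨fun x hx => hDomq v' x hx, ?_⟩
      have hsub2 : TS q n v' ⊆ {x | x ∈ B n ∧ pt n v' x ∈ Dom p} := by
        intro x hx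
        obtain ⟨hxB, hmem⟩ := hx
        rcases hmem with hp | ⟨hA1, hnd, hv⟩
        · exact ⟨hxB, ⟨_, hp, rfl⟩⟩
        · exfalso
          have : val (pt n v' x) = false := by rw [hval_eval v' x hxB, if_neg hv']
          rw [this] at hv
          exact Bool.noConfusion hv
      exact lt_of_le_of_lt (le_trans (Cardinal.mk_le_mk_of_subset hsub2) (hTcard p n v'))
        hρμ

/-- Extracting an exponent witness from `κ ≤ c ^< η` for regular `κ > η`. -/
lemma exists_exp {c κ : Cardinal.{u}} (hκ : κ.IsRegular) (hηκ : η < κ) (hη : ℵ₀ ≤ η)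
    (h : κ ≤ c ^< η) : ∃ ν, ν < η ∧ κ ≤ c ^ ν := by
  by_contra hcon
  push_neg at hcon
  have hle : c ^< η ≤ κ := Cardinal.powerlt_le.2 (fun x hx => le_of_lt (hcon x hx))
  set g : η.ord.ToType → Ordinal.{u} := fun ξ => (c ^ (tIdx ξ).card).ord with hg
  have hglt : ∀ ξ, g ξ < κ.ord := by
    intro ξ
    exact Cardinal.ord_lt_ord.2 (hcon _ (Cardinal.lt_ord.1 (tIdx_lt ξ)))
  have hι : #(η.ord.ToType) < κ.ord.cof := by
    rw [mk_toType_card, hκ.cof_eq]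
    exact hηκ
  have hsup : iSup g < κ.ord := Ordinal.iSup_lt_of_lt_cof hι hglt
  have hcard : (iSup g).card < κ := Cardinal.lt_ord.1 hsup
  obtain ⟨ν₀, hν₀, hν₀2⟩ : ∃ ν₀, ν₀ < η ∧ (iSup g).card < c ^ ν₀ := by
    by_contra hcc
    push_neg at hcc
    have : c ^< η ≤ (iSup g).card := Cardinal.powerlt_le.2 (fun x hx => hcc x hx)
    exact absurd (lt_of_lt_of_le hcard (le_trans h this)) (lt_irrefl _)
  obtain ⟨ξ, hξ⟩ := tIdx_surj (Cardinal.ord_lt_ord.2 hν₀)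
  have h1 : (c ^ ν₀).ord ≤ iSup g := by
    have h2 := Ordinal.le_iSup g ξ
    rw [hg] at h2
    simp only [hξ, Cardinal.card_ord] at h2
    exact h2
  exact absurd (lt_of_lt_of_le (Cardinal.lt_ord.2 hν₀2) h1) (lt_irrefl _)

end Constructions

section Part1

/-- Case κ < cf(η): Add(η,λ) is κ-descending distributive (in fact fully distributive). -/
lemma part1a (hη : ℵ₀ ≤ η) {κ : Cardinal.{u}} (hκcof : κ < η.ord.cof) :
    DescDist (AddCond η lam) κ := by
  classical
  intro D hOD hdec
  constructor
  · intro p hp q hq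
    refine Set.mem_iInter₂.2 (fun α hα => ?_)
    exact (hOD α hα).1 p (Set.mem_iInter₂.1 hp α hα) q hq
  · intro p
    set F : (α : Ordinal.{u}) → ((β : Ordinal.{u}) → β < α → AddCond η lam) → AddCond η lam :=
      fun α ih =>
        if h : ∃ q : AddCond η lam,
            q.1 = p.1 ∪ ⋃ i : α.ToType, (ih (tIdx i) (tIdx_lt i)).1 then
          (if h2 : α < κ.ord then ((hOD α h2).2 h.choose).choose else h.choose)
        else p
      with hF
    set ch : Ordinal.{u} → AddCond η lam := Ordinal.lt_wf.fix F with hch0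
    have hch : ∀ α, ch α = F α (fun β _ => ch β) := fun α => Ordinal.lt_wf.fix_eq F α
    -- the union over an initial segment is a legal condition
    have union_cond : ∀ γ : Ordinal.{u}, γ ≤ κ.ord →
        (∀ β, β < γ → ch β ≤ p ∧ (∀ β', β' < β → ch β ≤ ch β')) →
        ∃ q : AddCond η lam, q.1 = p.1 ∪ ⋃ i : γ.ToType, (ch (tIdx i)).1 := by
      intro γ hγ hkey
      refine ⟨⟨p.1 ∪ ⋃ i : γ.ToType, (ch (tIdx i)).1, ?_, ?_⟩, rfl⟩
      · rintro a b b' (hb | hb) (hb' | hb')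
        · exact fn p a b b' hb hb'
        · obtain ⟨Si, ⟨i, rfl⟩, hb'⟩ := hb'
          exact fn (ch (tIdx i)) a b b' ((hkey (tIdx i) (tIdx_lt i)).1 hb) hb'
        · obtain ⟨Si, ⟨i, rfl⟩, hb⟩ := hb
          exact fn (ch (tIdx i)) a b b' hb ((hkey (tIdx i) (tIdx_lt i)).1 hb')
        · obtain ⟨Si, ⟨i, rfl⟩, hb⟩ := hb
          obtain ⟨Sj, ⟨j, rfl⟩, hb'⟩ := hb'
          rcases lt_trichotomy (tIdx i) (tIdx j) with hij | hij | hij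
          · exact fn (ch (tIdx j)) a b b'
              ((hkey (tIdx j) (tIdx_lt j)).2 (tIdx i) hij hb) hb'
          · refine fn (ch (tIdx j)) a b b' ?_ hb'
            rw [← hij]
            exact hb
          · exact fn (ch (tIdx i)) a b b' hb
              ((hkey (tIdx i) (tIdx_lt i)).2 (tIdx j) hij hb')
      · have himg : Prod.fst '' (p.1 ∪ ⋃ i : γ.ToType, (ch (tIdx i)).1)
            = Dom p ∪ ⋃ i : γ.ToType, Dom (ch (tIdx i)) := by
          rw [Set.image_union, Set.image_iUnion]
          rfl
        rw [himg]
        refine lt_of_le_of_lt (Cardinal.mk_union_le _ _)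
          (Cardinal.add_lt_of_lt hη (mk_dom_lt p) ?_)
        refine lt_of_le_of_lt (Cardinal.mk_iUnion_le _) ?_
        have h1 : #(γ.ToType) < η.ord.cof := by
          rw [Cardinal.mk_toType]
          refine lt_of_le_of_lt ?_ hκcof
          refine le_trans (Ordinal.card_le_card hγ) ?_
          rw [Cardinal.card_ord]
        have h2 : ⨆ i : γ.ToType, #(Dom (ch (tIdx i))) < η :=
          Cardinal.iSup_lt_of_lt_cof_ord h1 (fun i => mk_dom_lt _)
        exact Cardinal.mul_lt_of_lt hη
          (lt_of_lt_of_le h1 (Ordinal.cof_ord_le η)) h2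
    have key : ∀ α : Ordinal.{u}, α < κ.ord →
        (ch α ≤ p ∧ (∀ β, β < α → ch α ≤ ch β)) ∧ ch α ∈ D α := by
      intro α
      induction α using Ordinal.induction with
      | _ α IH =>
        intro hα
        obtain ⟨qg, hqg⟩ := union_cond α (le_of_lt hα)
          (fun β hβ => ⟨((IH β hβ) (lt_trans hβ hα)).1.1, ((IH β hβ) (lt_trans hβ hα)).1.2⟩)
        have hglue : ∃ q : AddCond η lam,
            q.1 = p.1 ∪ ⋃ i : α.ToType, ((fun β (_ : β < α) => ch β) (tIdx i) (tIdx_lt i)).1 :=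
          ⟨qg, hqg⟩
        have hstep : ch α = ((hOD α hα).2 hglue.choose).choose := by
          rw [hch α, hF]
          simp only []
          rw [dif_pos hglue, dif_pos hα]
        have hspec := ((hOD α hα).2 hglue.choose).choose_spec
        have hgc : hglue.choose.1 = p.1 ∪ ⋃ i : α.ToType, (ch (tIdx i)).1 := hglue.choose_spec
        have hle1 : ch α ≤ hglue.choose := by rw [hstep]; exact hspec.2
        constructor
        · constructor
          · have : p.1 ⊆ hglue.choose.1 := by rw [hgc]; exact Set.subset_union_left
            exact le_trans hle1 this
          · intro β hβ
            have hsub : (ch β).1 ⊆ hglue.choose.1 := by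
              rw [hgc]
              obtain ⟨i, hi⟩ := tIdx_surj hβ
              refine Set.subset_union_of_subset_right ?_ _
              intro z hz
              exact Set.mem_iUnion.2 ⟨i, by rw [hi]; exact hz⟩
            exact le_trans hle1 hsub
        · rw [hstep]; exact hspec.1
    obtain ⟨qs, hqs⟩ := union_cond κ.ord le_rfl
      (fun β hβ => ⟨(key β hβ).1.1, (key β hβ).1.2⟩)
    have hqsp : qs ≤ p := by
      rw [le_iff, hqs]; intro z hz; exact Or.inl hz
    refine ⟨qs, ?_, hqsp⟩
    refine Set.mem_iInter₂.2 (fun α hα => ?_)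
    refine (hOD α hα).1 (ch α) (key α hα).2 qs ?_
    rw [le_iff, hqs]
    obtain ⟨i, hi⟩ := tIdx_surj hα
    intro z hz
    exact Or.inr (Set.mem_iUnion.2 ⟨i, by rw [hi]; exact hz⟩)

/-- Case κ > (η·λ)^{<η}: stabilization of decreasing sequences. -/
lemma part1b (hη : ℵ₀ ≤ η) (hlam : 0 < lam) {κ : Cardinal.{u}} (hκ : κ.IsRegular)
    (hbig : (η * lam) ^< η < κ) : DescDist (AddCond η lam) κ := by
  classical
  have hℵbase : ℵ₀ ≤ η * lam := by
    calc ℵ₀ ≤ η := hη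
      _ = η * 1 := (mul_one η).symm
      _ ≤ η * lam := mul_le_mul_right (Cardinal.one_le_iff_pos.2 hlam) η
  have hbase2 : (#((lam.out × η.out) × Bool) ⊔ ℵ₀) ≤ η * lam := by
    refine sup_le ?_ hℵbase
    simp only [Cardinal.mk_prod, Cardinal.lift_id, Cardinal.lift_id', Cardinal.mk_out,
      Cardinal.mk_bool, Cardinal.lift_ofNat]
    have h2ℵ : (2 : Cardinal.{u}) ≤ ℵ₀ := le_of_lt (by exact_mod_cast Cardinal.nat_lt_aleph0 2)
    calc lam * η * 2 ≤ (η * lam) * (η * lam) := by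
          rw [mul_comm lam η]
          exact mul_le_mul_right (le_trans h2ℵ hℵbase) _
      _ = η * lam := Cardinal.mul_eq_self hℵbase
  have hplt : η ≤ (η * lam) ^< η := by
    have h1 : (η * lam) ^ (1 : Cardinal.{u}) ≤ (η * lam) ^< η :=
      Cardinal.le_powerlt _ (lt_of_lt_of_le Cardinal.one_lt_aleph0 hη)
    rw [Cardinal.power_one] at h1
    calc η = η * 1 := (mul_one η).symm
      _ ≤ η * lam := mul_le_mul_right (Cardinal.one_le_iff_pos.2 hlam) η
      _ ≤ (η * lam) ^< η := h1
  have hcov : ∀ c : AddCond η lam, ∃ ξ : η.ord.ToType, #c.1 ≤ (tIdx ξ).card := by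
    intro c
    have h1 : #c.1 < η := by
      have hinj : Function.Injective
          (fun z : c.1 => (((⟨z.1.1, z.1, z.2, rfl⟩ : Dom c), z.1.2) : Dom c × Bool)) := by
        intro z z' h
        have h1 := congrArg (fun w : Dom c × Bool => (w.1 : lam.out × η.out)) h
        have h2 := congrArg (fun w : Dom c × Bool => w.2) h
        simp only at h1 h2
        exact Subtype.ext (Prod.ext h1 h2)
      refine lt_of_le_of_lt (Cardinal.mk_le_of_injective hinj) ?_
      simp only [Cardinal.mk_prod, Cardinal.lift_id, Cardinal.lift_id', Cardinal.mk_bool,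
        Cardinal.lift_ofNat]
      exact Cardinal.mul_lt_of_lt hη (mk_dom_lt c)
        (lt_of_lt_of_le (by exact_mod_cast Cardinal.nat_lt_aleph0 2) hη)
    obtain ⟨ξ, hξ⟩ := tIdx_surj (Cardinal.ord_lt_ord.2 h1)
    refine ⟨ξ, ?_⟩
    rw [hξ, Cardinal.card_ord]
  set Sξ : η.ord.ToType → Set (AddCond η lam) := fun ξ => {c | #c.1 ≤ (tIdx ξ).card}
    with hSξdef
  have hSξ : ∀ ξ, #(Sξ ξ) ≤ (η * lam) ^< η := by
    intro ξ
    have hembS : Function.Injective (fun c : Sξ ξ =>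
        (⟨c.1.1, c.2⟩ : {t : Set ((lam.out × η.out) × Bool) // #t ≤ (tIdx ξ).card})) := by
      intro c c' h
      have h1 := congrArg
        (fun t : {t : Set ((lam.out × η.out) × Bool) // #t ≤ (tIdx ξ).card} => t.1) h
      simp only at h1
      exact Subtype.ext (Subtype.ext h1)
    refine le_trans (Cardinal.mk_le_of_injective hembS) ?_
    refine le_trans (Cardinal.mk_bounded_set_le _ _) ?_
    refine le_trans (Cardinal.power_le_power_right hbase2) ?_
    exact Cardinal.le_powerlt _ (Cardinal.lt_ord.1 (tIdx_lt ξ))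
  have hcount : #(AddCond η lam) < κ := by
    have hne : Nonempty η.ord.ToType := by
      have h0 : η.ord ≠ 0 := by
        intro h
        have hcard := Cardinal.card_ord η
        rw [h, Ordinal.card_zero] at hcard
        have hη' : ℵ₀ ≤ (0 : Cardinal.{u}) := hcard ▸ hη
        exact absurd (le_zero_iff.1 hη') Cardinal.aleph0_ne_zero
      exact Ordinal.toType_nonempty_iff_ne_zero.2 h0
    have h0 : #(AddCond η lam) = #(Set.univ : Set (AddCond η lam)) := Cardinal.mk_univ.symm
    have huniv : (Set.univ : Set (AddCond η lam)) ⊆ ⋃ ξ, Sξ ξ :=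
      fun c _ => Set.mem_iUnion.2 (by obtain ⟨ξ, hξ⟩ := hcov c; exact ⟨ξ, hξ⟩)
    calc #(AddCond η lam) = #(Set.univ : Set (AddCond η lam)) := h0
      _ ≤ #(⋃ ξ, Sξ ξ) := Cardinal.mk_le_mk_of_subset huniv
      _ ≤ #(η.ord.ToType) * ⨆ ξ, #(Sξ ξ) := Cardinal.mk_iUnion_le Sξ
      _ ≤ η * (η * lam) ^< η := by
          refine mul_le_mul' (le_of_eq (mk_toType_card η)) ?_
          exact ciSup_le' hSξ
      _ = (η * lam) ^< η := by
          rw [Cardinal.mul_eq_max hη (le_trans hη hplt)]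
          exact max_eq_right hplt
      _ < κ := hbig
  intro D hOD hdec
  constructor
  · intro p hp q hq
    refine Set.mem_iInter₂.2 (fun α hα => ?_)
    exact (hOD α hα).1 p (Set.mem_iInter₂.1 hp α hα) q hq
  · intro p
    set f : AddCond η lam → Ordinal.{u} := fun q =>
      if h : ∃ α, α < κ.ord ∧ q ∉ D α then h.choose else 0 with hf
    have hflt : ∀ q, f q < κ.ord := by
      intro q
      rw [hf]
      by_cases h : ∃ α, α < κ.ord ∧ q ∉ D α
      · simp only [dif_pos h]
        exact h.choose_spec.1
      · simp only [dif_neg h]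
        rw [Cardinal.lt_ord, Ordinal.card_zero]
        exact lt_of_lt_of_le Cardinal.aleph0_pos hκ.aleph0_le
    have hα₀ : (⨆ q, f q) < κ.ord := by
      refine Ordinal.iSup_lt_of_lt_cof ?_ hflt
      rw [hκ.cof_eq]
      exact hcount
    obtain ⟨q, hqD, hqp⟩ := (hOD _ hα₀).2 p
    refine ⟨q, ?_, hqp⟩
    refine Set.mem_iInter₂.2 (fun α hα => ?_)
    by_contra hqα
    have hex : ∃ β, β < κ.ord ∧ q ∉ D β := ⟨α, hα, hqα⟩
    have h1 : q ∉ D (f q) ∧ f q < κ.ord := by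
      rw [hf]
      simp only [dif_pos hex]
      exact ⟨hex.choose_spec.2, hex.choose_spec.1⟩
    exact h1.1 (hdec (f q) _ (Ordinal.le_iSup f q) hα₀ hqD)

end Part1

end S7

/-- For `η ≥ ℵ₀`, `λ > 0` and regular infinite `κ`: `Add(η,λ)` is `κ`-descending
distributive if `κ < cf(η)` or `κ > (η·λ)^{<η}`, and it is not `κ`-descending
distributive if `cf(η) ≤ κ ≤ η^{<η}·λ`. -/
theorem statement7 (η lam : Cardinal.{u}) (hη : ℵ₀ ≤ η) (hlam : 0 < lam)
    (κ : Cardinal.{u}) (hκ : κ.IsRegular) :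
    ((κ < η.ord.cof ∨ (η * lam) ^< η < κ) → DescDist (AddCond η lam) κ) ∧
    ((η.ord.cof ≤ κ ∧ κ ≤ η ^< η * lam) → ¬ DescDist (AddCond η lam) κ) := by
  constructor
  · rintro (h1 | h2)
    · exact S7.part1a hη h1
    · exact S7.part1b hη hlam hκ h2
  · rintro ⟨hcf, hle⟩
    rcases eq_or_lt_of_le hcf with heq | hlt
    · have hreg : (η.ord.cof).IsRegular := by rw [heq]; exact hκ
      rw [← heq]
      exact S7.caseA hη hlam hreg
    · by_cases hκη : κ < η
      · exact S7.caseD hη hlam hκ hlt hκη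
      · have hηκ : η < κ := by
          rcases lt_or_eq_of_le (not_lt.1 hκη) with h | h
          · exact h
          · exfalso
            have hc : η.ord.cof = κ := by rw [h]; exact hκ.cof_eq
            rw [hc] at hlt
            exact lt_irrefl _ hlt
        by_cases h2 : κ ≤ 2 ^< η
        · obtain ⟨ν, hν, hcode⟩ := S7.exists_exp hκ hηκ hη h2
          exact S7.caseC1 hη hlam hκ hηκ hν hcode
        · by_cases h3 : κ ≤ η ^< η
          · obtain ⟨ν, hν, hcode⟩ := S7.exists_exp hκ hηκ hη h3
            exact S7.caseC2 hη hlam hκ hηκ (not_le.1 h2) hν hcode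
          · have hκlam : κ ≤ lam := by
              rcases le_total lam (η ^< η) with hl | hl
              · exfalso
                have hmul : η ^< η * lam ≤ η ^< η := by
                  calc η ^< η * lam ≤ η ^< η * (η ^< η) := mul_le_mul_right hl _
                    _ = η ^< η := Cardinal.mul_eq_self (le_trans hη (S7.eta_le_powerlt hη))
                exact h3 (le_trans hle hmul)
              · have hlaminf : ℵ₀ ≤ lam := le_trans (le_trans hη (S7.eta_le_powerlt hη)) hl
                have hmul : η ^< η * lam ≤ lam :=
                  calc η ^< η * lam ≤ lam * lam := mul_le_mul_left hl _
                    _ = lam := Cardinal.mul_eq_self hlaminf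
                exact le_trans hle hmul
            exact S7.caseE hη hκ hηκ hκlam
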